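/- arXiv:0804.0326 — 2 statements merged into one kernel-verified Lean document; each statement's English description precedes it below -/
import Mathlib

section
/- Let f: X → Y and g: Y → X be 𝒯-functors between L-separated 𝒯-categories with f ⊣ g. Then: (1) f is an epimorphism in Cat_sep 𝒯 iff f·g = 1_Y iff f is a split epimorphism in Cat_sep 𝒯; (2) f is a monomorphism in Cat_sep 𝒯 iff g·f = 1_X iff f is a split monomorphism in Cat_sep 𝒯. -/
universe u

namespace Paper

/-- A strict topological theory `𝒯 = (𝕋, V, ξ)`: a commutative unital quantale `V`
(a complete lattice with a commutative monoid structure whose multiplication preserves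
suprema in each variable, with `⊥ < k`), a `Set`-monad `𝕋 = (T, e, m)` such that `T`
sends pullbacks to weak pullbacks and the naturality squares of `m` are weak pullbacks,
and a `𝕋`-algebra structure `ξ : T V → V` for which `⊗` and `k` are `𝕋`-algebra
homomorphisms and `ξ_X := ξ ∘ T(-)` is a (monotone) natural transformation
`P_V → P_V T`. -/
structure TopTheory (V : Type u) [CompleteLattice V] (T : Type u → Type u) where
  tens : V → V → V
  unit : V
  tens_comm : ∀ u v : V, tens u v = tens v u
  tens_assoc : ∀ u v w : V, tens (tens u v) w = tens u (tens v w)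
  unit_tens : ∀ v : V, tens unit v = v
  tens_sSup : ∀ (u : V) (S : Set V), tens u (sSup S) = ⨆ v ∈ S, tens u v
  bot_lt_unit : (⊥ : V) < unit
  map : ∀ {X Y : Type u}, (X → Y) → T X → T Y
  map_id : ∀ {X : Type u}, map (id : X → X) = id
  map_comp : ∀ {X Y Z : Type u} (g : Y → Z) (f : X → Y) (𝔵 : T X),
    map (g ∘ f) 𝔵 = map g (map f 𝔵)
  e : ∀ {X : Type u}, X → T X
  m : ∀ {X : Type u}, T (T X) → T X
  e_nat : ∀ {X Y : Type u} (f : X → Y) (x : X), map f (e x) = e (f x)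
  m_nat : ∀ {X Y : Type u} (f : X → Y) (𝔛 : T (T X)), map f (m 𝔛) = m (map (map f) 𝔛)
  m_e : ∀ {X : Type u} (𝔵 : T X), m (e 𝔵) = 𝔵
  m_map_e : ∀ {X : Type u} (𝔵 : T X), m (map e 𝔵) = 𝔵
  m_assoc : ∀ {X : Type u} (𝔜 : T (T (T X))), m (m 𝔜) = m (map m 𝔜)
  /-- (BC): `T` sends pullbacks to weak pullbacks. -/
  map_bc : ∀ {X Y Z : Type u} (f : X → Z) (g : Y → Z) (𝔵 : T X) (𝔶 : T Y),
    map f 𝔵 = map g 𝔶 →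
    ∃ 𝔴 : T {p : X × Y // f p.1 = g p.2},
      map (fun p => p.1.1) 𝔴 = 𝔵 ∧ map (fun p => p.1.2) 𝔴 = 𝔶
  /-- (BC): every naturality square of `m` is a weak pullback. -/
  m_bc : ∀ {X Y : Type u} (f : X → Y) (𝔜 : T (T Y)) (𝔵 : T X),
    m 𝔜 = map f 𝔵 → ∃ 𝔛 : T (T X), map (map f) 𝔛 = 𝔜 ∧ m 𝔛 = 𝔵
  xi : T V → V
  xi_e : ∀ v : V, xi (e v) = v
  xi_m : ∀ 𝔙 : T (T V), xi (m 𝔙) = xi (map xi 𝔙)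
  /-- `k : 1 → V` is a `𝕋`-algebra homomorphism. -/
  xi_unit : ∀ {X : Type u} (𝔵 : T X), xi (map (fun _ => unit) 𝔵) = unit
  /-- `⊗ : V × V → V` is a `𝕋`-algebra homomorphism. -/
  xi_tens : ∀ 𝔴 : T (V × V),
    xi (map (fun p => tens p.1 p.2) 𝔴) = tens (xi (map Prod.fst 𝔴)) (xi (map Prod.snd 𝔴))
  /-- each component `ξ_X : V^X → V^{T X}` is monotone. -/
  xi_mono : ∀ {X : Type u} (φ φ' : X → V), (∀ x, φ x ≤ φ' x) →
    ∀ 𝔵 : T X, xi (map φ 𝔵) ≤ xi (map φ' 𝔵)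
  /-- `ξ_X` is a natural transformation `P_V → P_V T`. -/
  xi_nat : ∀ {X Y : Type u} (f : X → Y) (φ : X → V) (𝔶 : T Y),
    (⨆ 𝔵 : {𝔵 : T X // map f 𝔵 = 𝔶}, xi (map φ 𝔵.1)) =
      xi (map (fun y => ⨆ x : {x : X // f x = y}, φ x.1) 𝔶)

namespace TopTheory

variable {V : Type u} [CompleteLattice V] {T : Type u → Type u}

/-- The internal hom of the quantale: `u ⊗ (-) ⊣ hom (u, -)`. -/
def ihom (𝒯 : TopTheory V T) (u w : V) : V := sSup {z | 𝒯.tens u z ≤ w}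

/-- The extension `T_ξ` of `T : Set → Set` to `V`-relations. -/
def Txi (𝒯 : TopTheory V T) {X Y : Type u} (r : X → Y → V) (𝔵 : T X) (𝔶 : T Y) : V :=
  ⨆ 𝔴 : {w : T (X × Y) // 𝒯.map Prod.fst w = 𝔵 ∧ 𝒯.map Prod.snd w = 𝔶},
    𝒯.xi (𝒯.map (fun p => r p.1 p.2) 𝔴.1)

/-- Kleisli convolution `β ∘ α = β · T_ξ α · m_X°` of `𝒯`-relations
`α : X ⇸ Y` and `β : Y ⇸ Z`. -/
def kleisli (𝒯 : TopTheory V T) {X Y Z : Type u}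
    (β : T Y → Z → V) (α : T X → Y → V) (𝔵 : T X) (z : Z) : V :=
  ⨆ 𝔛 : {𝔛 : T (T X) // 𝒯.m 𝔛 = 𝔵}, ⨆ 𝔶 : T Y, 𝒯.tens (𝒯.Txi α 𝔛.1 𝔶) (β 𝔶 z)

/-- The `𝒯`-relation `e_X° : X ⇸ X`. -/
def unitRel (𝒯 : TopTheory V T) (X : Type u) (𝔵 : T X) (x : X) : V :=
  ⨆ _ : 𝔵 = 𝒯.e x, 𝒯.unit

/-- A `𝒯`-category structure on `X`: a `𝒯`-relation `a : X ⇸ X` with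
`e_X° ≤ a` and `a ∘ a ≤ a`. -/
structure TCatStr (𝒯 : TopTheory V T) (X : Type u) where
  rel : T X → X → V
  le_refl : ∀ x : X, 𝒯.unit ≤ rel (𝒯.e x) x
  comp : ∀ (𝔵 : T X) (x : X), 𝒯.kleisli rel rel 𝔵 x ≤ rel 𝔵 x

/-- The `𝒯`-module conditions `φ ∘ a ≤ φ` and `b ∘ φ ≤ φ` for a `𝒯`-relation
`φ : X ⇸ Y` between (structures underlying) `𝒯`-categories `(X,a)` and `(Y,b)`. -/
def IsTModRel (𝒯 : TopTheory V T) {X Y : Type u}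
    (a : T X → X → V) (b : T Y → Y → V) (φ : T X → Y → V) : Prop :=
  (∀ 𝔵 y, 𝒯.kleisli φ a 𝔵 y ≤ φ 𝔵 y) ∧ (∀ 𝔵 y, 𝒯.kleisli b φ 𝔵 y ≤ φ 𝔵 y)

variable {𝒯 : TopTheory V T}

/-- `f_* = b · T f`. -/
def modStar {X Y : Type u} (b : 𝒯.TCatStr Y) (f : X → Y) (𝔵 : T X) (y : Y) : V :=
  b.rel (𝒯.map f 𝔵) y

/-- `f^* = f° · b`. -/
def modCostar {X Y : Type u} (b : 𝒯.TCatStr Y) (f : X → Y) (𝔶 : T Y) (x : X) : V :=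
  b.rel 𝔶 (f x)

/-- The extension `φ ⟜ ψ` of `φ : X ⇸∘ Y` along `ψ : X ⇸∘ Z`, given by
`(φ ⟜ ψ)(𝔷,y) = ⋀_{𝔵 ∈ T X} hom((T_ξ ψ · m_X°)(𝔵,𝔷), φ(𝔵,y))`. -/
def extend (𝒯 : TopTheory V T) {X Y Z : Type u}
    (φ : T X → Y → V) (ψ : T X → Z → V) (𝔷 : T Z) (y : Y) : V :=
  ⨅ 𝔵 : T X, 𝒯.ihom (⨆ 𝔛 : {𝔛 : T (T X) // 𝒯.m 𝔛 = 𝔵}, 𝒯.Txi ψ 𝔛.1 𝔷) (φ 𝔵 y)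

/-- A `𝒯`-functor `f : (X,a) → (Y,b)`. -/
def IsTFunctor {X Y : Type u} (a : 𝒯.TCatStr X) (b : 𝒯.TCatStr Y) (f : X → Y) : Prop :=
  ∀ (𝔵 : T X) (x : X), a.rel 𝔵 x ≤ b.rel (𝒯.map f 𝔵) (f x)

/-- A fully faithful `𝒯`-functor. -/
def FullyFaithful {X Y : Type u} (a : 𝒯.TCatStr X) (b : 𝒯.TCatStr Y) (f : X → Y) : Prop :=
  ∀ (𝔵 : T X) (x : X), a.rel 𝔵 x = b.rel (𝒯.map f 𝔵) (f x)

/-- The order `f ≤ g ⟺ f^* ≤ g^*` on `𝒯`-functors `X → (Y,b)`. -/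
def funLE {X Y : Type u} (b : 𝒯.TCatStr Y) (f g : X → Y) : Prop :=
  ∀ (𝔶 : T Y) (x : X), b.rel 𝔶 (f x) ≤ b.rel 𝔶 (g x)

/-- Equivalence `f ≅ g ⟺ f^* = g^*` of `𝒯`-functors `X → (Y,b)`. -/
def FunEquiv {X Y : Type u} (b : 𝒯.TCatStr Y) (f g : X → Y) : Prop :=
  ∀ (𝔶 : T Y) (x : X), b.rel 𝔶 (f x) = b.rel 𝔶 (g x)

/-- `f ⊣ g`:  `1_X ≤ g·f` and `f·g ≤ 1_Y`. -/
def IsAdjunction {X Y : Type u} (a : 𝒯.TCatStr X) (b : 𝒯.TCatStr Y)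
    (f : X → Y) (g : Y → X) : Prop :=
  (∀ (𝔵 : T X) (x : X), a.rel 𝔵 x ≤ a.rel 𝔵 (g (f x))) ∧
    (∀ (𝔶 : T Y) (y : Y), b.rel 𝔶 (f (g y)) ≤ b.rel 𝔶 y)

/-- A left adjoint `𝒯`-functor. -/
def IsLeftAdjoint {X Y : Type u} (a : 𝒯.TCatStr X) (b : 𝒯.TCatStr Y) (f : X → Y) : Prop :=
  IsTFunctor a b f ∧ ∃ g : Y → X, IsTFunctor b a g ∧ IsAdjunction a b f g

/-- L-separatedness: equivalent `𝒯`-functors into `X` are equal. -/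
def Separated {X : Type u} (a : 𝒯.TCatStr X) : Prop :=
  ∀ (A : Type u) (as : 𝒯.TCatStr A) (f g : A → X),
    IsTFunctor as a f → IsTFunctor as a g → FunEquiv a f g → f = g

/-- Injectivity with respect to fully faithful `𝒯`-functors. -/
def Injective {X : Type u} (a : 𝒯.TCatStr X) : Prop :=
  ∀ (A B : Type u) (as : 𝒯.TCatStr A) (bs : 𝒯.TCatStr B) (f : A → X) (i : A → B),
    IsTFunctor as a f → IsTFunctor as bs i → FullyFaithful as bs i →
      ∃ g : B → X, IsTFunctor bs a g ∧ FunEquiv a (g ∘ i) f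

/-- `g : Z → X` is the `ψ`-weighted colimit of `h : A → X`, i.e. `g_* = h_* ⟜ ψ`. -/
def IsColimit {X A Z : Type u} (a : 𝒯.TCatStr X) (h : A → X) (ψ : T A → Z → V)
    (g : Z → X) : Prop :=
  ∀ (𝔷 : T Z) (x : X), modStar a g 𝔷 x = 𝒯.extend (modStar a h) ψ 𝔷 x

/-- Cocompleteness: every weighted diagram has a colimit. -/
def Cocomplete {X : Type u} (a : 𝒯.TCatStr X) : Prop :=
  ∀ (A Z : Type u) (as : 𝒯.TCatStr A) (cs : 𝒯.TCatStr Z) (h : A → X),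
    IsTFunctor as a h → ∀ ψ : T A → Z → V, 𝒯.IsTModRel as.rel cs.rel ψ →
      ∃ g : Z → X, IsTFunctor cs a g ∧ IsColimit a h ψ g

/-- Cocontinuity: preservation of all weighted colimits. -/
def Cocontinuous {X Y : Type u} (a : 𝒯.TCatStr X) (b : 𝒯.TCatStr Y) (f : X → Y) : Prop :=
  ∀ (A Z : Type u) (as : 𝒯.TCatStr A) (cs : 𝒯.TCatStr Z) (h : A → X)
    (ψ : T A → Z → V) (g : Z → X),
    IsTFunctor as a h → 𝒯.IsTModRel as.rel cs.rel ψ → IsTFunctor cs a g →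
      IsColimit a h ψ g → IsColimit b (f ∘ h) ψ (f ∘ g)

/-- A presheaf on `(X,a)`: a `𝒯`-module `X ⇸∘ G`, where `G = (1, e_1°)`. -/
def IsPresheaf {X : Type u} (a : 𝒯.TCatStr X) (ψ : T X → V) : Prop :=
  𝒯.IsTModRel a.rel (𝒯.unitRel PUnit) (fun 𝔵 _ => ψ 𝔵)

/-- The underlying set of the presheaf `𝒯`-category `X̂`. -/
def Hat {X : Type u} (a : 𝒯.TCatStr X) : Type u := {ψ : T X → V // IsPresheaf a ψ}

/-- The `𝒯`-category structure `⟦-,-⟧` of `V^{|X|}`. -/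
def powRel (𝒯 : TopTheory V T) (X : Type u) (𝔭 : T (T X → V)) (ψ : T X → V) : V :=
  ⨅ 𝔮 : {q : T ((T X) × (T X → V)) // 𝒯.map Prod.snd q = 𝔭},
    𝒯.ihom (𝒯.xi (𝒯.map (fun p => p.2 p.1) 𝔮.1)) (ψ (𝒯.m (𝒯.map Prod.fst 𝔮.1)))

/-- `hs` is the `𝒯`-category structure on `X̂` inherited from `V^{|X|}`. -/
def IsHatStr {X : Type u} (a : 𝒯.TCatStr X) (hs : 𝒯.TCatStr (Hat a)) : Prop :=
  ∀ (𝔭 : T (Hat a)) (ψ : Hat a), hs.rel 𝔭 ψ = 𝒯.powRel X (𝒯.map Subtype.val 𝔭) ψ.1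

/-- `y` is the Yoneda functor `X → X̂`, `y x = a(-,x)`. -/
def IsYoneda {X : Type u} (a : 𝒯.TCatStr X) (y : X → Hat a) : Prop :=
  ∀ (x : X) (𝔵 : T X), (y x).1 𝔵 = a.rel 𝔵 x

/-- The underlying map `ψ ↦ ψ ∘ f^*` of `f̂ : X̂ → Ŷ`. -/
def hatMapRel {X Y : Type u} (b : 𝒯.TCatStr Y) (f : X → Y) (ψ : T X → V) (𝔶 : T Y) : V :=
  𝒯.kleisli (fun 𝔵 (_ : PUnit.{u + 1}) => ψ 𝔵) (modCostar b f) 𝔶 PUnit.unit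

/-- `fh` is the `𝒯`-functor `f̂ : X̂ → Ŷ`, with underlying map `ψ ↦ ψ ∘ f^*`. -/
def IsHatMap {X Y : Type u} (a : 𝒯.TCatStr X) (b : 𝒯.TCatStr Y) (f : X → Y)
    (fh : Hat a → Hat b) : Prop :=
  ∀ (ψ : Hat a) (𝔶 : T Y), (fh ψ).1 𝔶 = hatMapRel b f ψ.1 𝔶

/-- An inhabited `𝒯`-module: `k ≤ ⋀_y ⋁_𝔵 φ(𝔵,y)`. -/
def InhabitedMod (𝒯 : TopTheory V T) {X Y : Type u} (φ : T X → Y → V) : Prop :=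
  𝒯.unit ≤ ⨅ y : Y, ⨆ 𝔵 : T X, φ 𝔵 y

/-- A dense `𝒯`-functor: `f_*` is inhabited. -/
def Dense {X Y : Type u} (b : 𝒯.TCatStr Y) (f : X → Y) : Prop :=
  𝒯.InhabitedMod (modStar b f)

/-- The underlying set of `X⁺ = {ψ ∈ X̂ ∣ ψ inhabited}`. -/
def Plus {X : Type u} (a : 𝒯.TCatStr X) : Type u :=
  {ψ : Hat a // 𝒯.InhabitedMod (fun 𝔵 (_ : PUnit.{u + 1}) => ψ.1 𝔵)}

/-- `ps` is the `𝒯`-category structure on `X⁺` inherited from `X̂`. -/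
def IsPlusStr {X : Type u} (a : 𝒯.TCatStr X) (hs : 𝒯.TCatStr (Hat a))
    (ps : 𝒯.TCatStr (Plus a)) : Prop :=
  ∀ (𝔭 : T (Plus a)) (ψ : Plus a), ps.rel 𝔭 ψ = hs.rel (𝒯.map Subtype.val 𝔭) ψ.1

/-- Inhabited-cocompleteness: all colimits with inhabited weights exist. -/
def ICocomplete {X : Type u} (a : 𝒯.TCatStr X) : Prop :=
  ∀ (A Z : Type u) (as : 𝒯.TCatStr A) (cs : 𝒯.TCatStr Z) (h : A → X),
    IsTFunctor as a h → ∀ ψ : T A → Z → V, 𝒯.IsTModRel as.rel cs.rel ψ →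
      𝒯.InhabitedMod ψ → ∃ g : Z → X, IsTFunctor cs a g ∧ IsColimit a h ψ g

/-- Inhabited-cocontinuity: preservation of all colimits with inhabited weights. -/
def ICocontinuous {X Y : Type u} (a : 𝒯.TCatStr X) (b : 𝒯.TCatStr Y) (f : X → Y) : Prop :=
  ∀ (A Z : Type u) (as : 𝒯.TCatStr A) (cs : 𝒯.TCatStr Z) (h : A → X)
    (ψ : T A → Z → V) (g : Z → X),
    IsTFunctor as a h → 𝒯.IsTModRel as.rel cs.rel ψ → 𝒯.InhabitedMod ψ →
      IsTFunctor cs a g → IsColimit a h ψ g → IsColimit b (f ∘ h) ψ (f ∘ g)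


section AuxStmt17

variable {𝒯 : TopTheory V T}

lemma aux_tens_mono_right {u v w : V} (h : v ≤ w) : 𝒯.tens u v ≤ 𝒯.tens u w := by
  have hs : sSup ({v, w} : Set V) = w := by
    rw [sSup_pair, sup_eq_right.mpr h]
  have := 𝒯.tens_sSup u ({v, w} : Set V)
  rw [hs] at this
  rw [this]
  exact le_biSup (fun z => 𝒯.tens u z) (Set.mem_insert v {w})

lemma aux_tens_mono_left {u v w : V} (h : v ≤ w) : 𝒯.tens v u ≤ 𝒯.tens w u := by
  rw [𝒯.tens_comm v u, 𝒯.tens_comm w u]; exact aux_tens_mono_right h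

lemma aux_tens_unit (u : V) : 𝒯.tens u 𝒯.unit = u := by
  rw [𝒯.tens_comm, 𝒯.unit_tens]

/-- Transitivity step: if `k ≤ c(e z, z')` then `c(𝔷, z) ≤ c(𝔷, z')`. -/
lemma aux_step {Z : Type u} (c : 𝒯.TCatStr Z) (𝔷 : T Z) (z z' : Z)
    (h : 𝒯.unit ≤ c.rel (𝒯.e z) z') : c.rel 𝔷 z ≤ c.rel 𝔷 z' := by
  have hTxi : c.rel 𝔷 z ≤ 𝒯.Txi c.rel (𝒯.e 𝔷) (𝒯.e z) := by
    have h𝔴 : 𝒯.map Prod.fst (𝒯.e (𝔷, z)) = 𝒯.e 𝔷 ∧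
        𝒯.map Prod.snd (𝒯.e (𝔷, z)) = 𝒯.e z := ⟨𝒯.e_nat _ _, 𝒯.e_nat _ _⟩
    have hval : 𝒯.xi (𝒯.map (fun p : T Z × Z => c.rel p.1 p.2) (𝒯.e (𝔷, z)))
        = c.rel 𝔷 z := by rw [𝒯.e_nat, 𝒯.xi_e]
    calc c.rel 𝔷 z
        = 𝒯.xi (𝒯.map (fun p : T Z × Z => c.rel p.1 p.2) (𝒯.e (𝔷, z))) := hval.symm
      _ ≤ _ := le_iSup
          (fun 𝔴 : {w : T (T Z × Z) // 𝒯.map Prod.fst w = 𝒯.e 𝔷 ∧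
              𝒯.map Prod.snd w = 𝒯.e z} =>
            𝒯.xi (𝒯.map (fun p : T Z × Z => c.rel p.1 p.2) 𝔴.1)) ⟨𝒯.e (𝔷, z), h𝔴⟩
  have hk : 𝒯.tens (𝒯.Txi c.rel (𝒯.e 𝔷) (𝒯.e z)) (c.rel (𝒯.e z) z')
      ≤ 𝒯.kleisli c.rel c.rel 𝔷 z' := by
    refine le_trans ?_ (le_iSup
      (fun 𝔛 : {𝔛 : T (T Z) // 𝒯.m 𝔛 = 𝔷} =>
        ⨆ 𝔶 : T Z, 𝒯.tens (𝒯.Txi c.rel 𝔛.1 𝔶) (c.rel 𝔶 z')) ⟨𝒯.e 𝔷, 𝒯.m_e 𝔷⟩)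
    exact le_iSup (fun 𝔶 : T Z => 𝒯.tens (𝒯.Txi c.rel (𝒯.e 𝔷) 𝔶) (c.rel 𝔶 z')) (𝒯.e z)
  calc c.rel 𝔷 z = 𝒯.tens (c.rel 𝔷 z) 𝒯.unit := (aux_tens_unit _).symm
    _ ≤ 𝒯.tens (c.rel 𝔷 z) (c.rel (𝒯.e z) z') := aux_tens_mono_right h
    _ ≤ 𝒯.tens (𝒯.Txi c.rel (𝒯.e 𝔷) (𝒯.e z)) (c.rel (𝒯.e z) z') :=
        aux_tens_mono_left hTxi
    _ ≤ 𝒯.kleisli c.rel c.rel 𝔷 z' := hk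
    _ ≤ c.rel 𝔷 z' := c.comp 𝔷 z'

lemma aux_id_functor {Z : Type u} (c : 𝒯.TCatStr Z) :
    IsTFunctor c c (id : Z → Z) := by
  intro 𝔷 z
  rw [𝒯.map_id]
  exact le_rfl

lemma aux_comp_functor {X Y Z : Type u} {a : 𝒯.TCatStr X} {b : 𝒯.TCatStr Y}
    {c : 𝒯.TCatStr Z} {f : X → Y} {h : Y → Z}
    (hf : IsTFunctor a b f) (hh : IsTFunctor b c h) : IsTFunctor a c (h ∘ f) := by
  intro 𝔵 x
  rw [𝒯.map_comp]
  exact le_trans (hf 𝔵 x) (hh (𝒯.map f 𝔵) (f x))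

end AuxStmt17

/-- Lemma 4.4. Let `f : X → Y` and `g : Y → X` be `𝒯`-functors
between L-separated `𝒯`-categories with `f ⊣ g`. Then: (1) `f` is an epimorphism in
`Cat_sep 𝒯` iff `f·g = 1_Y` iff `f` is a split epimorphism; (2) `f` is a monomorphism
in `Cat_sep 𝒯` iff `g·f = 1_X` iff `f` is a split monomorphism. -/
theorem statement17 (𝒯 : TopTheory V T) {X Y : Type u}
    (a : 𝒯.TCatStr X) (b : 𝒯.TCatStr Y) (ha : Separated a) (hb : Separated b)
    (f : X → Y) (g : Y → X) (hf : IsTFunctor a b f) (hg : IsTFunctor b a g)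
    (adj : IsAdjunction a b f g) :
    ((∀ (Z : Type u) (c : 𝒯.TCatStr Z), Separated c →
        ∀ h k : Y → Z, IsTFunctor b c h → IsTFunctor b c k → h ∘ f = k ∘ f → h = k) ↔
      f ∘ g = id) ∧
    ((f ∘ g = id) ↔ ∃ s : Y → X, IsTFunctor b a s ∧ f ∘ s = id) ∧
    ((∀ (Z : Type u) (c : 𝒯.TCatStr Z), Separated c →
        ∀ h k : Z → X, IsTFunctor c a h → IsTFunctor c a k → f ∘ h = f ∘ k → h = k) ↔
      g ∘ f = id) ∧
    ((g ∘ f = id) ↔ ∃ r : Y → X, IsTFunctor b a r ∧ r ∘ f = id) := by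
  have hGF : IsTFunctor a a (g ∘ f) := aux_comp_functor hf hg
  have hFG : IsTFunctor b b (f ∘ g) := aux_comp_functor hg hf
  have hFGF : IsTFunctor a b (f ∘ (g ∘ f)) := aux_comp_functor hGF hf
  -- key inequality: `b(𝔶, f x) ≤ b(𝔶, f (g (f x)))`
  have key1 : ∀ (𝔶 : T Y) (x : X), b.rel 𝔶 (f x) ≤ b.rel 𝔶 (f (g (f x))) := by
    intro 𝔶 x
    apply aux_step b 𝔶 (f x) (f (g (f x)))
    have h1 : 𝒯.unit ≤ a.rel (𝒯.e x) (g (f x)) :=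
      le_trans (a.le_refl x) (adj.1 (𝒯.e x) x)
    have h2 := hf (𝒯.e x) (g (f x))
    rw [𝒯.e_nat] at h2
    exact le_trans h1 h2
  -- `f ∘ g ∘ f = f` by L-separatedness of `Y`
  have fgf : (f ∘ (g ∘ f)) = f := by
    apply hb X a (f ∘ (g ∘ f)) f hFGF hf
    intro 𝔶 x
    exact le_antisymm (adj.2 𝔶 (f x)) (key1 𝔶 x)
  refine ⟨?_, ?_, ?_, ?_⟩
  · -- epi ↔ f ∘ g = id
    constructor
    · intro epi
      exact epi Y b hb (f ∘ g) id hFG (aux_id_functor b)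
        (by funext x; exact congrFun fgf x)
    · intro hfg Z c _ h k _ _ heq
      funext y
      have hy : f (g y) = y := congrFun hfg y
      calc h y = h (f (g y)) := by rw [hy]
        _ = k (f (g y)) := congrFun heq (g y)
        _ = k y := by rw [hy]
  · -- f ∘ g = id ↔ split epi
    constructor
    · intro hfg; exact ⟨g, hg, hfg⟩
    · rintro ⟨s, _, hfs⟩
      apply hb Y b (f ∘ g) id hFG (aux_id_functor b)
      intro 𝔶 y
      have hy : f (s y) = y := congrFun hfs y
      refine le_antisymm (adj.2 𝔶 y) ?_
      have hk := key1 𝔶 (s y)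
      rw [hy] at hk
      exact hk
  · -- mono ↔ g ∘ f = id
    constructor
    · intro mono
      exact mono X a ha (g ∘ f) id hGF (aux_id_functor a)
        (by funext x; exact congrFun fgf x)
    · intro hgf Z c _ h k _ _ heq
      funext z
      have hz1 : g (f (h z)) = h z := congrFun hgf (h z)
      have hz2 : g (f (k z)) = k z := congrFun hgf (k z)
      have hz3 : f (h z) = f (k z) := congrFun heq z
      calc h z = g (f (h z)) := hz1.symm
        _ = g (f (k z)) := by rw [hz3]
        _ = k z := hz2
  · -- g ∘ f = id ↔ split mono
    constructor
    · intro hgf; exact ⟨g, hg, hgf⟩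
    · rintro ⟨r, hr, hrf⟩
      apply ha X a (g ∘ f) id hGF (aux_id_functor a)
      intro 𝔵 x
      refine le_antisymm ?_ (adj.1 𝔵 x)
      apply aux_step a 𝔵 (g (f x)) x
      have h1 : 𝒯.unit ≤ b.rel (𝒯.e (f (g (f x)))) (f (g (f x))) := b.le_refl _
      have h2 : b.rel (𝒯.e (f (g (f x)))) (f (g (f x)))
          ≤ b.rel (𝒯.e (f (g (f x)))) (f x) := adj.2 _ (f x)
      have h3 := hr (𝒯.e (f (g (f x)))) (f x)
      rw [𝒯.e_nat] at h3
      have hrx : r (f x) = x := congrFun hrf x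
      have hrg : r (f (g (f x))) = g (f x) := congrFun hrf (g (f x))
      rw [hrx, hrg] at h3
      exact le_trans (le_trans h1 h2) h3

end TopTheory

end Paper
end

section
/- For a 𝒯-functor f: X → Y the following are equivalent: (i) f is dense; (ii) f⁺: X⁺ → Y⁺ is left adjoint; (iii) f⁺ is dense. If moreover X and Y are inhabited-cocomplete and f is inhabited-cocontinuous, these are also equivalent to: (iv) f is left adjoint. -/
universe u

namespace Paper

namespace TopTheory

variable {V : Type u} [CompleteLattice V] {T : Type u → Type u}

variable {𝒯 : TopTheory V T}

section Aux

variable {V : Type u} [CompleteLattice V] {T : Type u → Type u} {𝒯 : TopTheory V T}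

lemma map_map {X Y Z : Type u} (f : X → Y) (g : Y → Z) (𝔵 : T X) :
    𝒯.map g (𝒯.map f 𝔵) = 𝒯.map (fun x => g (f x)) 𝔵 := (𝒯.map_comp g f 𝔵).symm

lemma map_congr {X Y : Type u} {f g : X → Y} (h : ∀ x, f x = g x) (𝔵 : T X) :
    𝒯.map f 𝔵 = 𝒯.map g 𝔵 := by rw [funext h]

lemma tens_le_tens_right {v w : V} (h : v ≤ w) (u : V) : 𝒯.tens u v ≤ 𝒯.tens u w := by
  have h2 := 𝒯.tens_sSup u {v, w}
  rw [sSup_pair, sup_eq_right.mpr h] at h2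
  rw [h2]
  exact le_iSup₂ (f := fun x (_ : x ∈ ({v, w} : Set V)) => 𝒯.tens u x) v (by simp)

lemma tens_le_tens_left {v w : V} (h : v ≤ w) (u : V) : 𝒯.tens v u ≤ 𝒯.tens w u := by
  rw [𝒯.tens_comm v u, 𝒯.tens_comm w u]
  exact tens_le_tens_right h u

lemma tens_iSup {ι : Sort*} (u : V) (v : ι → V) :
    𝒯.tens u (⨆ i, v i) = ⨆ i, 𝒯.tens u (v i) := by
  rw [← sSup_range, 𝒯.tens_sSup, iSup_range]

lemma tens_iSup_left {ι : Sort*} (v : ι → V) (u : V) :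
    𝒯.tens (⨆ i, v i) u = ⨆ i, 𝒯.tens (v i) u := by
  rw [𝒯.tens_comm, tens_iSup]
  exact iSup_congr fun i => 𝒯.tens_comm u (v i)

lemma tens_bot (u : V) : 𝒯.tens u (⊥ : V) = ⊥ := by
  have h := 𝒯.tens_sSup u ∅
  simpa using h

lemma tens_unit (v : V) : 𝒯.tens v 𝒯.unit = v := by rw [𝒯.tens_comm, 𝒯.unit_tens]

lemma tens_ihom_le (u w : V) : 𝒯.tens u (𝒯.ihom u w) ≤ w := by
  rw [TopTheory.ihom, 𝒯.tens_sSup]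
  exact iSup₂_le fun v hv => hv

lemma le_ihom {u w z : V} (h : 𝒯.tens u z ≤ w) : z ≤ 𝒯.ihom u w := le_sSup h

lemma tens_le_of_le_ihom {u w z : V} (h : z ≤ 𝒯.ihom u w) : 𝒯.tens u z ≤ w :=
  (tens_le_tens_right h u).trans (tens_ihom_le u w)

lemma ihom_mono (u : V) {w w' : V} (h : w ≤ w') : 𝒯.ihom u w ≤ 𝒯.ihom u w' :=
  le_ihom ((tens_ihom_le u w).trans h)

lemma unit_le_xi {X : Type u} (φ : X → V) (h : ∀ x, 𝒯.unit ≤ φ x) (𝔵 : T X) :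
    𝒯.unit ≤ 𝒯.xi (𝒯.map φ 𝔵) := by
  calc 𝒯.unit = 𝒯.xi (𝒯.map (fun _ => 𝒯.unit) 𝔵) := (𝒯.xi_unit 𝔵).symm
    _ ≤ _ := 𝒯.xi_mono _ _ h 𝔵

lemma le_Txi {X Y : Type u} (r : X → Y → V) {𝔵 : T X} {𝔶 : T Y} (𝔴 : T (X × Y))
    (h1 : 𝒯.map Prod.fst 𝔴 = 𝔵) (h2 : 𝒯.map Prod.snd 𝔴 = 𝔶) :
    𝒯.xi (𝒯.map (fun p => r p.1 p.2) 𝔴) ≤ 𝒯.Txi r 𝔵 𝔶 :=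
  le_iSup (fun 𝔴' : {w : T (X × Y) // 𝒯.map Prod.fst w = 𝔵 ∧ 𝒯.map Prod.snd w = 𝔶} =>
    𝒯.xi (𝒯.map (fun p => r p.1 p.2) 𝔴'.1)) ⟨𝔴, h1, h2⟩

lemma Txi_mono {X Y : Type u} {r r' : X → Y → V} (h : ∀ x y, r x y ≤ r' x y)
    (𝔵 : T X) (𝔶 : T Y) : 𝒯.Txi r 𝔵 𝔶 ≤ 𝒯.Txi r' 𝔵 𝔶 :=
  iSup_mono fun 𝔴 => 𝒯.xi_mono _ _ (fun p => h p.1 p.2) 𝔴.1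

lemma Txi_map {X Y X' Y' : Type u} (r : X' → Y' → V) (u : X → X') (v : Y → Y')
    (𝔵 : T X) (𝔶 : T Y) :
    𝒯.Txi (fun x y => r (u x) (v y)) 𝔵 𝔶 ≤ 𝒯.Txi r (𝒯.map u 𝔵) (𝒯.map v 𝔶) := by
  refine iSup_le fun 𝔴p => ?_
  obtain ⟨𝔴, h1, h2⟩ := 𝔴p
  refine le_trans (le_of_eq ?_) (le_Txi r (𝒯.map (fun p => (u p.1, v p.2)) 𝔴) ?_ ?_)
  · rw [map_map]
  · rw [map_map, ← h1, map_map]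
  · rw [map_map, ← h2, map_map]

lemma Txi_comp_le {X Y X' Y' : Type u} {r : X → Y → V} {r' : X' → Y' → V}
    (u : X → X') (v : Y → Y') (h : ∀ x y, r x y ≤ r' (u x) (v y)) (𝔵 : T X) (𝔶 : T Y) :
    𝒯.Txi r 𝔵 𝔶 ≤ 𝒯.Txi r' (𝒯.map u 𝔵) (𝒯.map v 𝔶) :=
  le_trans (Txi_mono h 𝔵 𝔶) (Txi_map r' u v 𝔵 𝔶)

lemma le_Txi_pure {X Y : Type u} (r : X → Y → V) (x : X) (y : Y) :
    r x y ≤ 𝒯.Txi r (𝒯.e x) (𝒯.e y) := by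
  refine le_trans (le_of_eq ?_) (le_Txi r (𝒯.e (x, y)) (𝒯.e_nat _ _) (𝒯.e_nat _ _))
  rw [𝒯.e_nat, 𝒯.xi_e]

end Aux
section Aux2

variable {V : Type u} [CompleteLattice V] {T : Type u → Type u} {𝒯 : TopTheory V T}

lemma tens_Txi_le {Y : Type u} (b : 𝒯.TCatStr Y) (𝔜 : T (T Y)) (𝔶' : T Y) (y : Y) :
    𝒯.tens (𝒯.Txi b.rel 𝔜 𝔶') (b.rel 𝔶' y) ≤ b.rel (𝒯.m 𝔜) y := by
  refine le_trans ?_ (b.comp (𝒯.m 𝔜) y)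
  exact le_trans (le_iSup (fun 𝔶'' : T Y => 𝒯.tens (𝒯.Txi b.rel 𝔜 𝔶'') (b.rel 𝔶'' y)) 𝔶')
    (le_iSup (fun 𝔛 : {𝔛 : T (T Y) // 𝒯.m 𝔛 = 𝒯.m 𝔜} =>
      ⨆ 𝔶'' : T Y, 𝒯.tens (𝒯.Txi b.rel 𝔛.1 𝔶'') (b.rel 𝔶'' y)) ⟨𝔜, rfl⟩)

lemma tens_rel_le {Y : Type u} (b : 𝒯.TCatStr Y) (𝔶 : T Y) (z y : Y) :
    𝒯.tens (b.rel 𝔶 z) (b.rel (𝒯.e z) y) ≤ b.rel 𝔶 y := by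
  have h := tens_Txi_le b (𝒯.e 𝔶) (𝒯.e z) y
  rw [𝒯.m_e] at h
  exact le_trans (tens_le_tens_left (le_Txi_pure b.rel 𝔶 z) _) h

lemma Txi_e_le {Y : Type u} (b : 𝒯.TCatStr Y) (𝔜 : T (T Y)) (y : Y) :
    𝒯.Txi b.rel 𝔜 (𝒯.e y) ≤ b.rel (𝒯.m 𝔜) y :=
  calc 𝒯.Txi b.rel 𝔜 (𝒯.e y) = 𝒯.tens (𝒯.Txi b.rel 𝔜 (𝒯.e y)) 𝒯.unit := (tens_unit _).symm
    _ ≤ 𝒯.tens (𝒯.Txi b.rel 𝔜 (𝒯.e y)) (b.rel (𝒯.e y) y) := tens_le_tens_right (b.le_refl y) _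
    _ ≤ _ := tens_Txi_le b 𝔜 (𝒯.e y) y

lemma psh_tensor {Y : Type u} {b : 𝒯.TCatStr Y} {ψ : T Y → V} (hψ : IsPresheaf b ψ)
    (𝔜 : T (T Y)) (𝔶' : T Y) :
    𝒯.tens (𝒯.Txi b.rel 𝔜 𝔶') (ψ 𝔶') ≤ ψ (𝒯.m 𝔜) := by
  refine le_trans ?_ (hψ.1 (𝒯.m 𝔜) PUnit.unit)
  exact le_trans (le_iSup (fun 𝔶'' : T Y => 𝒯.tens (𝒯.Txi b.rel 𝔜 𝔶'') (ψ 𝔶'')) 𝔶')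
    (le_iSup (fun 𝔛 : {𝔛 : T (T Y) // 𝒯.m 𝔛 = 𝒯.m 𝔜} =>
      ⨆ 𝔶'' : T Y, 𝒯.tens (𝒯.Txi b.rel 𝔛.1 𝔶'') (ψ 𝔶'')) ⟨𝔜, rfl⟩)

lemma psh_flat {Y : Type u} {b : 𝒯.TCatStr Y} {ψ : T Y → V} (hψ : IsPresheaf b ψ)
    (𝔜 : T (T Y)) :
    𝒯.Txi (fun 𝔶 (_ : PUnit.{u+1}) => ψ 𝔶) 𝔜 (𝒯.e PUnit.unit) ≤ ψ (𝒯.m 𝔜) := by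
  refine le_trans ?_ (hψ.2 (𝒯.m 𝔜) PUnit.unit)
  have hu : 𝒯.unitRel PUnit (𝒯.e PUnit.unit) PUnit.unit = 𝒯.unit := iSup_pos rfl
  refine le_trans (le_of_eq ?_)
    (le_trans (le_iSup (fun 𝔭 : T PUnit.{u+1} =>
        𝒯.tens (𝒯.Txi (fun 𝔶 (_ : PUnit.{u+1}) => ψ 𝔶) 𝔜 𝔭) (𝒯.unitRel PUnit 𝔭 PUnit.unit))
      (𝒯.e PUnit.unit))
      (le_iSup (fun 𝔛 : {𝔛 : T (T Y) // 𝒯.m 𝔛 = 𝒯.m 𝔜} =>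
        ⨆ 𝔭 : T PUnit.{u+1},
          𝒯.tens (𝒯.Txi (fun 𝔶 (_ : PUnit.{u+1}) => ψ 𝔶) 𝔛.1 𝔭) (𝒯.unitRel PUnit 𝔭 PUnit.unit))
        ⟨𝔜, rfl⟩))
  rw [hu, tens_unit]

lemma hatMapRel_eq {X Y : Type u} (b : 𝒯.TCatStr Y) (f : X → Y) (ψ : T X → V) (𝔶 : T Y) :
    hatMapRel b f ψ 𝔶 = ⨆ 𝔴 : {𝔴 : T (T Y × X) // 𝒯.m (𝒯.map Prod.fst 𝔴) = 𝔶},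
      𝒯.tens (𝒯.xi (𝒯.map (fun p => b.rel p.1 (f p.2)) 𝔴.1)) (ψ (𝒯.map Prod.snd 𝔴.1)) := by
  apply le_antisymm
  · refine iSup_le fun 𝔜 => iSup_le fun 𝔵 => ?_
    have hT : 𝒯.Txi (modCostar b f) 𝔜.1 𝔵 =
        ⨆ 𝔴 : {w : T (T Y × X) // 𝒯.map Prod.fst w = 𝔜.1 ∧ 𝒯.map Prod.snd w = 𝔵},
          𝒯.xi (𝒯.map (fun p => b.rel p.1 (f p.2)) 𝔴.1) := rfl
    rw [hT, tens_iSup_left]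
    refine iSup_le fun 𝔴p => ?_
    obtain ⟨𝔴, hw1, hw2⟩ := 𝔴p
    subst hw2
    exact le_iSup_of_le ⟨𝔴, by rw [hw1, 𝔜.2]⟩ le_rfl
  · refine iSup_le fun 𝔴 => ?_
    refine le_trans ?_ (le_iSup (fun 𝔛 : {𝔛 : T (T Y) // 𝒯.m 𝔛 = 𝔶} =>
      ⨆ 𝔵 : T X, 𝒯.tens (𝒯.Txi (modCostar b f) 𝔛.1 𝔵) (ψ 𝔵)) ⟨𝒯.map Prod.fst 𝔴.1, 𝔴.2⟩)
    refine le_trans ?_ (le_iSup _ (𝒯.map Prod.snd 𝔴.1))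
    exact tens_le_tens_left (le_Txi (modCostar b f) 𝔴.1 rfl rfl) _

lemma le_hatMap_self {X Y : Type u} (b : 𝒯.TCatStr Y) (f : X → Y) (ψ : T X → V) (𝔵 : T X) :
    ψ 𝔵 ≤ hatMapRel b f ψ (𝒯.map f 𝔵) := by
  rw [hatMapRel_eq]
  have hfst : 𝒯.m (𝒯.map Prod.fst (𝒯.map (fun x => (𝒯.e (f x), x)) 𝔵)) = 𝒯.map f 𝔵 := by
    rw [map_map]
    have : 𝒯.map (fun x => (𝒯.e (f x), x).1) 𝔵 = 𝒯.map 𝒯.e (𝒯.map f 𝔵) := by rw [map_map]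
    rw [this, 𝒯.m_map_e]
  refine le_trans ?_ (le_iSup _ ⟨𝒯.map (fun x => (𝒯.e (f x), x)) 𝔵, hfst⟩)
  have hsnd : 𝒯.map Prod.snd (𝒯.map (fun x => (𝒯.e (f x), x)) 𝔵) = 𝔵 := by
    rw [map_map]
    exact congrFun 𝒯.map_id 𝔵
  have hval : 𝒯.map (fun p => b.rel p.1 (f p.2)) (𝒯.map (fun x => (𝒯.e (f x), x)) 𝔵) =
      𝒯.map (fun x => b.rel (𝒯.e (f x)) (f x)) 𝔵 := by rw [map_map]
  rw [hsnd, hval]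
  calc ψ 𝔵 = 𝒯.tens 𝒯.unit (ψ 𝔵) := (𝒯.unit_tens _).symm
    _ ≤ _ := tens_le_tens_left (unit_le_xi _ (fun x => b.le_refl (f x)) 𝔵) _

lemma hatMap_comp_le {X Y : Type u} {b : 𝒯.TCatStr Y} (f : X → Y) {ψ : T Y → V}
    (hψ : IsPresheaf b ψ) (𝔶 : T Y) :
    hatMapRel b f (fun 𝔵 => ψ (𝒯.map f 𝔵)) 𝔶 ≤ ψ 𝔶 := by
  rw [hatMapRel_eq]
  refine iSup_le fun 𝔴 => ?_
  have hval : 𝒯.map (fun p => b.rel p.1 (f p.2)) 𝔴.1 =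
      𝒯.map (fun p => b.rel p.1 p.2) (𝒯.map (fun p : T Y × X => (p.1, f p.2)) 𝔴.1) := by
    rw [map_map]
  have hsnd : ψ (𝒯.map f (𝒯.map Prod.snd 𝔴.1)) =
      ψ (𝒯.map Prod.snd (𝒯.map (fun p : T Y × X => (p.1, f p.2)) 𝔴.1)) := by
    rw [map_map, map_map]
  have hfst : 𝒯.map Prod.fst (𝒯.map (fun p : T Y × X => (p.1, f p.2)) 𝔴.1) =
      𝒯.map Prod.fst 𝔴.1 := by rw [map_map]
  show 𝒯.tens (𝒯.xi (𝒯.map (fun p => b.rel p.1 (f p.2)) 𝔴.1))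
      (ψ (𝒯.map f (𝒯.map Prod.snd 𝔴.1))) ≤ ψ 𝔶
  rw [hval, hsnd]
  refine le_trans (tens_le_tens_left (le_Txi b.rel _ rfl rfl) _) ?_
  refine le_trans (psh_tensor hψ _ _) (le_of_eq ?_)
  rw [hfst, 𝔴.2]

end Aux2
section Aux3

variable {V : Type u} [CompleteLattice V] {T : Type u → Type u} {𝒯 : TopTheory V T}

lemma iSup_snd_fiber {A B : Type u} (φ : A × B → V) (y : B) :
    (⨆ x : {x : A × B // x.2 = y}, φ x.1) = ⨆ a : A, φ (a, y) := by
  apply le_antisymm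
  · refine iSup_le fun x => ?_
    obtain ⟨⟨a, b0⟩, rfl⟩ := x
    exact le_iSup (fun a' => φ (a', b0)) a
  · exact iSup_le fun a => le_iSup_of_le ⟨(a, y), rfl⟩ le_rfl

lemma iSup_pair_fiber {A B C : Type u} (g : A → B) (φ : A × C → V) (s : B × C) :
    (⨆ x : {x : A × C // (g x.1, x.2) = s}, φ x.1) = ⨆ w : {w : A // g w = s.1}, φ (w.1, s.2) := by
  obtain ⟨s1, s2⟩ := s
  apply le_antisymm
  · refine iSup_le fun x => ?_
    obtain ⟨⟨aa, cc⟩, hx⟩ := x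
    rw [Prod.mk.injEq] at hx
    obtain ⟨h1, h2⟩ := hx
    subst h1; subst h2
    exact le_iSup_of_le (⟨aa, rfl⟩ : {w : A // g w = g aa}) le_rfl
  · refine iSup_le fun w => ?_
    exact le_iSup_of_le (⟨(w.1, s2), by rw [w.2]⟩ : {x : A × C // (g x.1, x.2) = (s1, s2)}) le_rfl

lemma modStar_isMod {X Y : Type u} {a : 𝒯.TCatStr X} {b : 𝒯.TCatStr Y} {f : X → Y}
    (hf : IsTFunctor a b f) : 𝒯.IsTModRel a.rel b.rel (modStar b f) := by
  constructor
  · intro 𝔵 y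
    refine iSup_le fun 𝔛 => iSup_le fun 𝔵' => ?_
    have h1 : 𝒯.Txi a.rel 𝔛.1 𝔵' ≤ 𝒯.Txi b.rel (𝒯.map (𝒯.map f) 𝔛.1) (𝒯.map f 𝔵') :=
      Txi_comp_le (𝒯.map f) f hf 𝔛.1 𝔵'
    refine le_trans (tens_le_tens_left h1 _) ?_
    refine le_trans (tens_Txi_le b _ _ y) (le_of_eq ?_)
    show b.rel (𝒯.m (𝒯.map (𝒯.map f) 𝔛.1)) y = modStar b f 𝔵 y
    rw [← 𝒯.m_nat, 𝔛.2]
    rfl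
  · intro 𝔵 y
    refine iSup_le fun 𝔛 => iSup_le fun 𝔶' => ?_
    have h1 : 𝒯.Txi (modStar b f) 𝔛.1 𝔶' ≤ 𝒯.Txi b.rel (𝒯.map (𝒯.map f) 𝔛.1) (𝒯.map id 𝔶') :=
      Txi_comp_le (𝒯.map f) id (fun 𝔵₀ y₀ => le_rfl) 𝔛.1 𝔶'
    rw [𝒯.map_id] at h1
    refine le_trans (tens_le_tens_left h1 _) ?_
    refine le_trans (tens_Txi_le b _ _ y) (le_of_eq ?_)
    show b.rel (𝒯.m (𝒯.map (𝒯.map f) 𝔛.1)) y = modStar b f 𝔵 y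
    rw [← 𝒯.m_nat, 𝔛.2]
    rfl

lemma pullback_presheaf {X Y : Type u} {a : 𝒯.TCatStr X} {b : 𝒯.TCatStr Y} {f : X → Y}
    (hf : IsTFunctor a b f) {ψ : T Y → V} (hψ : IsPresheaf b ψ) :
    IsPresheaf a (fun 𝔵 => ψ (𝒯.map f 𝔵)) := by
  constructor
  · intro 𝔵 u
    refine iSup_le fun 𝔛 => iSup_le fun 𝔵' => ?_
    have h1 : 𝒯.Txi a.rel 𝔛.1 𝔵' ≤ 𝒯.Txi b.rel (𝒯.map (𝒯.map f) 𝔛.1) (𝒯.map f 𝔵') :=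
      Txi_comp_le (𝒯.map f) f hf 𝔛.1 𝔵'
    refine le_trans (tens_le_tens_left h1 _) ?_
    refine le_trans (psh_tensor hψ _ _) (le_of_eq ?_)
    rw [← 𝒯.m_nat, 𝔛.2]
  · intro 𝔵 u
    refine iSup_le fun 𝔛 => iSup_le fun 𝔭 => ?_
    by_cases h𝔭 : 𝔭 = 𝒯.e u
    · subst h𝔭
      cases u
      have hu : 𝒯.unitRel PUnit (𝒯.e PUnit.unit) PUnit.unit = 𝒯.unit := iSup_pos rfl
      rw [hu, tens_unit]
      have h1 : 𝒯.Txi (fun 𝔵₀ (_ : PUnit.{u+1}) => ψ (𝒯.map f 𝔵₀)) 𝔛.1 (𝒯.e PUnit.unit) ≤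
          𝒯.Txi (fun 𝔶₀ (_ : PUnit.{u+1}) => ψ 𝔶₀) (𝒯.map (𝒯.map f) 𝔛.1)
            (𝒯.map id (𝒯.e PUnit.unit)) :=
        Txi_comp_le (r := fun 𝔵₀ (_ : PUnit.{u+1}) => ψ (𝒯.map f 𝔵₀))
          (r' := fun 𝔶₀ (_ : PUnit.{u+1}) => ψ 𝔶₀) (𝒯.map f) id
          (fun 𝔵₀ p => le_rfl) 𝔛.1 (𝒯.e PUnit.unit)
      rw [𝒯.map_id] at h1
      refine le_trans h1 ?_
      refine le_trans (psh_flat hψ _) (le_of_eq ?_)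
      rw [← 𝒯.m_nat, 𝔛.2]
    · have hu : 𝒯.unitRel PUnit 𝔭 u = (⊥ : V) := by
        rw [TopTheory.unitRel]
        exact iSup_neg h𝔭
      rw [hu, tens_bot]
      exact bot_le

lemma yoneda_presheaf {Y : Type u} (b : 𝒯.TCatStr Y) (y : Y) :
    IsPresheaf b (fun 𝔶 => b.rel 𝔶 y) := by
  constructor
  · exact fun 𝔵 _ => b.comp 𝔵 y
  · intro 𝔵 u
    refine iSup_le fun 𝔛 => iSup_le fun 𝔭 => ?_
    by_cases h𝔭 : 𝔭 = 𝒯.e u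
    · subst h𝔭
      cases u
      have hu : 𝒯.unitRel PUnit (𝒯.e PUnit.unit) PUnit.unit = 𝒯.unit := iSup_pos rfl
      rw [hu, tens_unit]
      have h1 : 𝒯.Txi (fun 𝔶₀ (_ : PUnit.{u+1}) => b.rel 𝔶₀ y) 𝔛.1 (𝒯.e PUnit.unit) ≤
          𝒯.Txi b.rel (𝒯.map id 𝔛.1) (𝒯.map (fun _ => y) (𝒯.e PUnit.unit)) :=
        Txi_comp_le (r := fun 𝔶₀ (_ : PUnit.{u+1}) => b.rel 𝔶₀ y) (r' := b.rel)
          id (fun _ => y) (fun 𝔶₀ p => le_rfl) 𝔛.1 (𝒯.e PUnit.unit)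
      rw [𝒯.map_id, 𝒯.e_nat] at h1
      refine le_trans h1 ?_
      refine le_trans (Txi_e_le b 𝔛.1 y) (le_of_eq ?_)
      rw [𝔛.2]
    · have hu : 𝒯.unitRel PUnit 𝔭 u = (⊥ : V) := by
        rw [TopTheory.unitRel]
        exact iSup_neg h𝔭
      rw [hu, tens_bot]
      exact bot_le

lemma adj_dense {A B : Type u} {as : 𝒯.TCatStr A} {bs : 𝒯.TCatStr B} {u : A → B} {v : B → A}
    (hadj : IsAdjunction as bs u v) : Dense bs u := by
  refine le_iInf fun y => ?_
  refine le_trans ?_ (le_iSup (fun 𝔵 : T A => modStar bs u 𝔵 y) (𝒯.e (v y)))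
  show 𝒯.unit ≤ bs.rel (𝒯.map u (𝒯.e (v y))) y
  rw [𝒯.e_nat]
  exact le_trans (bs.le_refl (u (v y))) (hadj.2 (𝒯.e (u (v y))) y)

lemma dense_psh_inhabited {X Y : Type u} {b : 𝒯.TCatStr Y} {f : X → Y} (hd : Dense b f)
    {ψ : T Y → V} (hψ : IsPresheaf b ψ) (hinh : 𝒯.unit ≤ ⨆ 𝔶 : T Y, ψ 𝔶) :
    𝒯.unit ≤ ⨆ 𝔵 : T X, ψ (𝒯.map f 𝔵) := by
  have key : ∀ 𝔶' : T Y, ψ 𝔶' ≤ ⨆ 𝔵 : T X, ψ (𝒯.map f 𝔵) := by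
    intro 𝔶'
    have h1 : 𝒯.unit ≤ 𝒯.xi (𝒯.map (fun y => ⨆ 𝔵 : T X, b.rel (𝒯.map f 𝔵) y) 𝔶') :=
      unit_le_xi _ (fun y => le_trans hd (iInf_le _ y)) 𝔶'
    have h2 := 𝒯.xi_nat (Prod.snd : T X × Y → Y) (fun p => b.rel (𝒯.map f p.1) p.2) 𝔶'
    have h3 : (fun y => ⨆ x : {x : T X × Y // x.2 = y}, b.rel (𝒯.map f x.1.1) x.1.2) =
        (fun y => ⨆ 𝔵 : T X, b.rel (𝒯.map f 𝔵) y) := by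
      funext y
      exact iSup_snd_fiber (fun p => b.rel (𝒯.map f p.1) p.2) y
    rw [h3] at h2
    rw [← h2] at h1
    calc ψ 𝔶' = 𝒯.tens 𝒯.unit (ψ 𝔶') := (𝒯.unit_tens _).symm
      _ ≤ 𝒯.tens (⨆ 𝔯 : {𝔯 : T (T X × Y) // 𝒯.map Prod.snd 𝔯 = 𝔶'},
            𝒯.xi (𝒯.map (fun p => b.rel (𝒯.map f p.1) p.2) 𝔯.1)) (ψ 𝔶') :=
          tens_le_tens_left h1 _
      _ = ⨆ 𝔯 : {𝔯 : T (T X × Y) // 𝒯.map Prod.snd 𝔯 = 𝔶'},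
            𝒯.tens (𝒯.xi (𝒯.map (fun p => b.rel (𝒯.map f p.1) p.2) 𝔯.1)) (ψ 𝔶') :=
          tens_iSup_left _ _
      _ ≤ ⨆ 𝔵 : T X, ψ (𝒯.map f 𝔵) := ?_
    refine iSup_le fun 𝔯p => ?_
    obtain ⟨𝔯, hr⟩ := 𝔯p
    have h4 : 𝒯.xi (𝒯.map (fun p => b.rel (𝒯.map f p.1) p.2) 𝔯) ≤
        𝒯.Txi b.rel (𝒯.map (fun p : T X × Y => 𝒯.map f p.1) 𝔯) 𝔶' := by
      refine le_trans (le_of_eq ?_) (le_Txi b.rel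
        (𝒯.map (fun p : T X × Y => (𝒯.map f p.1, p.2)) 𝔯) ?_ ?_)
      · rw [map_map]
      · rw [map_map]
      · rw [map_map, ← hr]
    refine le_trans (tens_le_tens_left h4 _) ?_
    refine le_trans (psh_tensor hψ _ _) ?_
    have h5 : 𝒯.m (𝒯.map (fun p : T X × Y => 𝒯.map f p.1) 𝔯) =
        𝒯.map f (𝒯.m (𝒯.map Prod.fst 𝔯)) := by
      rw [𝒯.m_nat, map_map]
    rw [h5]
    exact le_iSup (fun 𝔵 : T X => ψ (𝒯.map f 𝔵)) (𝒯.m (𝒯.map Prod.fst 𝔯))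
  exact le_trans hinh (iSup_le key)

lemma powRel_mono {X : Type u} (𝔭 : T (T X → V)) {ψ ψ' : T X → V} (h : ∀ 𝔵, ψ 𝔵 ≤ ψ' 𝔵) :
    𝒯.powRel X 𝔭 ψ ≤ 𝒯.powRel X 𝔭 ψ' :=
  iInf_mono fun 𝔮 => ihom_mono _ (h _)

lemma powRel_precomp {X Y : Type u} (f : X → Y) (𝔭 : T (T Y → V)) (χ : T Y → V) :
    𝒯.powRel Y 𝔭 χ ≤
      𝒯.powRel X (𝒯.map (fun ρ : T Y → V => fun 𝔵 => ρ (𝒯.map f 𝔵)) 𝔭)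
        (fun 𝔵 => χ (𝒯.map f 𝔵)) := by
  refine le_iInf fun 𝔮 => ?_
  obtain ⟨𝔴, hw1, hw2⟩ := 𝒯.map_bc Prod.snd (fun ρ : T Y → V => fun 𝔵 => ρ (𝒯.map f 𝔵))
    𝔮.1 𝔭 𝔮.2
  set q' : T (T Y × (T Y → V)) := 𝒯.map (fun w => (𝒯.map f w.1.1.1, w.1.2)) 𝔴 with hq'
  have hsnd : 𝒯.map Prod.snd q' = 𝔭 := by
    rw [hq', map_map, ← hw2]
  have hev : 𝒯.map (fun p : T Y × (T Y → V) => p.2 p.1) q' =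
      𝒯.map (fun p : T X × (T X → V) => p.2 p.1) 𝔮.1 := by
    rw [hq', map_map, ← hw1, map_map]
    exact map_congr (fun w => (congrFun w.2 w.1.1.1).symm) 𝔴
  have hfst : 𝒯.m (𝒯.map Prod.fst q') = 𝒯.map f (𝒯.m (𝒯.map Prod.fst 𝔮.1)) := by
    rw [hq', map_map, ← hw1, map_map]
    have : 𝒯.map (fun w : {p : (T X × (T X → V)) × (T Y → V) //
        Prod.snd p.1 = (fun ρ : T Y → V => fun 𝔵 => ρ (𝒯.map f 𝔵)) p.2} =>
        𝒯.map f w.1.1.1) 𝔴 = 𝒯.map (𝒯.map f) (𝒯.map (fun w => w.1.1.1) 𝔴) := by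
      rw [map_map]
    rw [this, ← 𝒯.m_nat]
  refine le_trans (iInf_le _ ⟨q', hsnd⟩) (le_of_eq ?_)
  rw [hev, hfst]

end Aux3
section Aux4

variable {V : Type u} [CompleteLattice V] {T : Type u → Type u} {𝒯 : TopTheory V T}

lemma powRel_hatMap_le {X Y A : Type u} (b : 𝒯.TCatStr Y) (f : X → Y) (va : A → (T X → V))
    (χ : T X → V) (𝔭 : T A) :
    𝒯.powRel X (𝒯.map va 𝔭) χ ≤
      𝒯.powRel Y (𝒯.map (fun q => hatMapRel b f (va q)) 𝔭) (hatMapRel b f χ) := by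
  set L := 𝒯.powRel X (𝒯.map va 𝔭) χ with hL0
  refine le_iInf fun 𝔮p => ?_
  obtain ⟨𝔮, h𝔮⟩ := 𝔮p
  refine le_ihom ?_
  obtain ⟨𝔴, hw1, hw2⟩ :=
    𝒯.map_bc Prod.snd (fun q : A => hatMapRel b f (va q)) 𝔮 𝔭 h𝔮
  set 𝔰 : T (T Y × A) := 𝒯.map (fun w => (w.1.1.1, w.1.2)) 𝔴 with hs
  have hev : 𝒯.map (fun p : T Y × (T Y → V) => p.2 p.1) 𝔮 =
      𝒯.map (fun s : T Y × A => hatMapRel b f (va s.2) s.1) 𝔰 := by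
    rw [← hw1, hs]
    refine (map_map _ _ _).trans (Eq.trans ?_ (map_map _ _ _).symm)
    exact map_congr (fun w => congrFun w.2 w.1.1.1) 𝔴
  have hsnd𝔰 : 𝒯.map Prod.snd 𝔰 = 𝔭 := by
    rw [hs]; exact (map_map _ _ _).trans hw2
  have hfst𝔰 : 𝒯.map Prod.fst 𝔰 = 𝒯.map Prod.fst 𝔮 := by
    rw [hs, ← hw1, map_map, map_map]
  have hF : (fun s : T Y × A =>
        ⨆ x : {x : T (T Y × X) × A // (𝒯.m (𝒯.map Prod.fst x.1), x.2) = s},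
          𝒯.tens (𝒯.xi (𝒯.map (fun p : T Y × X => b.rel p.1 (f p.2)) x.1.1))
            (va x.1.2 (𝒯.map Prod.snd x.1.1))) =
      (fun s : T Y × A => hatMapRel b f (va s.2) s.1) := by
    funext s
    rw [hatMapRel_eq]
    exact iSup_pair_fiber (fun 𝔴' : T (T Y × X) => 𝒯.m (𝒯.map Prod.fst 𝔴'))
      (fun q : T (T Y × X) × A =>
        𝒯.tens (𝒯.xi (𝒯.map (fun p : T Y × X => b.rel p.1 (f p.2)) q.1))
          (va q.2 (𝒯.map Prod.snd q.1))) s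
  have hxn := 𝒯.xi_nat (fun q : T (T Y × X) × A => ((𝒯.m (𝒯.map Prod.fst q.1), q.2) : T Y × A))
    (fun q : T (T Y × X) × A =>
      𝒯.tens (𝒯.xi (𝒯.map (fun p : T Y × X => b.rel p.1 (f p.2)) q.1))
        (va q.2 (𝒯.map Prod.snd q.1))) 𝔰
  rw [hF] at hxn
  have key : ∀ 𝔱 : T (T (T Y × X) × A),
      𝒯.map (fun q : T (T Y × X) × A => ((𝒯.m (𝒯.map Prod.fst q.1), q.2) : T Y × A)) 𝔱 = 𝔰 →
      𝒯.tens (𝒯.xi (𝒯.map (fun q : T (T Y × X) × A =>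
        𝒯.tens (𝒯.xi (𝒯.map (fun p : T Y × X => b.rel p.1 (f p.2)) q.1))
          (va q.2 (𝒯.map Prod.snd q.1))) 𝔱)) L ≤
        hatMapRel b f χ (𝒯.m (𝒯.map Prod.fst 𝔮)) := by
    intro 𝔱 h𝔱
    set 𝔅 : T (T (T Y × X)) := 𝒯.map (fun q : T (T Y × X) × A => q.1) 𝔱 with h𝔅
    have hq2 : 𝒯.map (fun q : T (T Y × X) × A => q.2) 𝔱 = 𝔭 := by
      have e1 : 𝒯.map Prod.snd (𝒯.map (fun q : T (T Y × X) × A =>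
          ((𝒯.m (𝒯.map Prod.fst q.1), q.2) : T Y × A)) 𝔱) =
          𝒯.map (fun q : T (T Y × X) × A => q.2) 𝔱 := map_map _ _ _
      rw [← e1, h𝔱, hsnd𝔰]
    have hWsnd : 𝒯.map Prod.snd (𝒯.m 𝔅) =
        𝒯.m (𝒯.map (fun q : T (T Y × X) × A => 𝒯.map Prod.snd q.1) 𝔱) := by
      have e1 : 𝒯.map Prod.snd (𝒯.m 𝔅) = 𝒯.m (𝒯.map (𝒯.map Prod.snd) 𝔅) := 𝒯.m_nat _ _
      have e2 : 𝒯.map (𝒯.map Prod.snd) 𝔅 =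
          𝒯.map (fun q : T (T Y × X) × A => 𝒯.map Prod.snd q.1) 𝔱 := by
        rw [h𝔅]; exact map_map _ _ _
      rw [e1, e2]
    have hWfst : 𝒯.m (𝒯.map Prod.fst (𝒯.m 𝔅)) = 𝒯.m (𝒯.map Prod.fst 𝔮) := by
      have e1 : 𝒯.map Prod.fst (𝒯.m 𝔅) = 𝒯.m (𝒯.map (𝒯.map Prod.fst) 𝔅) := 𝒯.m_nat _ _
      have e2 : 𝒯.map (𝒯.map Prod.fst) 𝔅 =
          𝒯.map (fun q : T (T Y × X) × A => 𝒯.map Prod.fst q.1) 𝔱 := by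
        rw [h𝔅]; exact map_map _ _ _
      have e4 : 𝒯.map 𝒯.m (𝒯.map (fun q : T (T Y × X) × A => 𝒯.map Prod.fst q.1) 𝔱) =
          𝒯.map (fun q : T (T Y × X) × A => 𝒯.m (𝒯.map Prod.fst q.1)) 𝔱 := map_map _ _ _
      have e5 : 𝒯.map (fun q : T (T Y × X) × A => 𝒯.m (𝒯.map Prod.fst q.1)) 𝔱 =
          𝒯.map Prod.fst (𝒯.map (fun q : T (T Y × X) × A =>
            ((𝒯.m (𝒯.map Prod.fst q.1), q.2) : T Y × A)) 𝔱) :=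
        (map_map (fun q : T (T Y × X) × A =>
          ((𝒯.m (𝒯.map Prod.fst q.1), q.2) : T Y × A)) Prod.fst 𝔱).symm
      rw [e1, e2, 𝒯.m_assoc, e4, e5, h𝔱, hfst𝔰]
    have hsplit : 𝒯.xi (𝒯.map (fun q : T (T Y × X) × A =>
        𝒯.tens (𝒯.xi (𝒯.map (fun p : T Y × X => b.rel p.1 (f p.2)) q.1))
          (va q.2 (𝒯.map Prod.snd q.1))) 𝔱) =
        𝒯.tens (𝒯.xi (𝒯.map (fun p : T Y × X => b.rel p.1 (f p.2)) (𝒯.m 𝔅)))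
          (𝒯.xi (𝒯.map (fun q : T (T Y × X) × A => va q.2 (𝒯.map Prod.snd q.1)) 𝔱)) := by
      have e1 : 𝒯.map (fun q : T (T Y × X) × A =>
          𝒯.tens (𝒯.xi (𝒯.map (fun p : T Y × X => b.rel p.1 (f p.2)) q.1))
            (va q.2 (𝒯.map Prod.snd q.1))) 𝔱 =
          𝒯.map (fun p : V × V => 𝒯.tens p.1 p.2)
            (𝒯.map (fun q : T (T Y × X) × A =>
              ((𝒯.xi (𝒯.map (fun p : T Y × X => b.rel p.1 (f p.2)) q.1),
                va q.2 (𝒯.map Prod.snd q.1)) : V × V)) 𝔱) :=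
        (map_map (fun q : T (T Y × X) × A =>
            ((𝒯.xi (𝒯.map (fun p : T Y × X => b.rel p.1 (f p.2)) q.1),
              va q.2 (𝒯.map Prod.snd q.1)) : V × V))
          (fun p : V × V => 𝒯.tens p.1 p.2) 𝔱).symm
      rw [e1, 𝒯.xi_tens]
      have e2 : 𝒯.map Prod.fst (𝒯.map (fun q : T (T Y × X) × A =>
          ((𝒯.xi (𝒯.map (fun p : T Y × X => b.rel p.1 (f p.2)) q.1),
            va q.2 (𝒯.map Prod.snd q.1)) : V × V)) 𝔱) =
          𝒯.map (fun q : T (T Y × X) × A =>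
            𝒯.xi (𝒯.map (fun p : T Y × X => b.rel p.1 (f p.2)) q.1)) 𝔱 := map_map _ _ _
      have e3 : 𝒯.map (fun q : T (T Y × X) × A =>
          𝒯.xi (𝒯.map (fun p : T Y × X => b.rel p.1 (f p.2)) q.1)) 𝔱 =
          𝒯.map 𝒯.xi (𝒯.map (fun q : T (T Y × X) × A =>
            𝒯.map (fun p : T Y × X => b.rel p.1 (f p.2)) q.1) 𝔱) := (map_map _ _ _).symm
      have e4 : 𝒯.map (fun q : T (T Y × X) × A =>
          𝒯.map (fun p : T Y × X => b.rel p.1 (f p.2)) q.1) 𝔱 =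
          𝒯.map (𝒯.map (fun p : T Y × X => b.rel p.1 (f p.2))) 𝔅 := by
        rw [h𝔅]; exact (map_map _ _ _).symm
      have e5 : 𝒯.map Prod.snd (𝒯.map (fun q : T (T Y × X) × A =>
          ((𝒯.xi (𝒯.map (fun p : T Y × X => b.rel p.1 (f p.2)) q.1),
            va q.2 (𝒯.map Prod.snd q.1)) : V × V)) 𝔱) =
          𝒯.map (fun q : T (T Y × X) × A => va q.2 (𝒯.map Prod.snd q.1)) 𝔱 := map_map _ _ _
      rw [e2, e3, e4, ← 𝒯.xi_m, ← 𝒯.m_nat, e5]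
    have hq3 : 𝒯.map Prod.snd (𝒯.map (fun q : T (T Y × X) × A =>
        ((𝒯.map Prod.snd q.1, va q.2) : T X × (T X → V))) 𝔱) = 𝒯.map va 𝔭 := by
      have e1 : 𝒯.map Prod.snd (𝒯.map (fun q : T (T Y × X) × A =>
          ((𝒯.map Prod.snd q.1, va q.2) : T X × (T X → V))) 𝔱) =
          𝒯.map (fun q : T (T Y × X) × A => va q.2) 𝔱 := map_map _ _ _
      have e2 : 𝒯.map (fun q : T (T Y × X) × A => va q.2) 𝔱 =
          𝒯.map va (𝒯.map (fun q : T (T Y × X) × A => q.2) 𝔱) := (map_map _ _ _).symm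
      rw [e1, e2, hq2]
    have hLev : 𝒯.map (fun p : T X × (T X → V) => p.2 p.1)
        (𝒯.map (fun q : T (T Y × X) × A =>
          ((𝒯.map Prod.snd q.1, va q.2) : T X × (T X → V))) 𝔱) =
        𝒯.map (fun q : T (T Y × X) × A => va q.2 (𝒯.map Prod.snd q.1)) 𝔱 := map_map _ _ _
    have hLfst : 𝒯.m (𝒯.map Prod.fst (𝒯.map (fun q : T (T Y × X) × A =>
        ((𝒯.map Prod.snd q.1, va q.2) : T X × (T X → V))) 𝔱)) =
        𝒯.map Prod.snd (𝒯.m 𝔅) := by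
      have e1 : 𝒯.map Prod.fst (𝒯.map (fun q : T (T Y × X) × A =>
          ((𝒯.map Prod.snd q.1, va q.2) : T X × (T X → V))) 𝔱) =
          𝒯.map (fun q : T (T Y × X) × A => 𝒯.map Prod.snd q.1) 𝔱 := map_map _ _ _
      rw [e1, ← hWsnd]
    have hLbound : L ≤ 𝒯.ihom
        (𝒯.xi (𝒯.map (fun q : T (T Y × X) × A => va q.2 (𝒯.map Prod.snd q.1)) 𝔱))
        (χ (𝒯.map Prod.snd (𝒯.m 𝔅))) := by
      rw [hL0]
      refine le_trans (iInf_le _ ⟨𝒯.map (fun q : T (T Y × X) × A =>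
        ((𝒯.map Prod.snd q.1, va q.2) : T X × (T X → V))) 𝔱, hq3⟩) (le_of_eq ?_)
      rw [hLev, hLfst]
    calc 𝒯.tens (𝒯.xi (𝒯.map (fun q : T (T Y × X) × A =>
          𝒯.tens (𝒯.xi (𝒯.map (fun p : T Y × X => b.rel p.1 (f p.2)) q.1))
            (va q.2 (𝒯.map Prod.snd q.1))) 𝔱)) L
        = 𝒯.tens (𝒯.tens (𝒯.xi (𝒯.map (fun p : T Y × X => b.rel p.1 (f p.2)) (𝒯.m 𝔅)))
            (𝒯.xi (𝒯.map (fun q : T (T Y × X) × A => va q.2 (𝒯.map Prod.snd q.1)) 𝔱))) L := by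
          rw [hsplit]
      _ = 𝒯.tens (𝒯.xi (𝒯.map (fun p : T Y × X => b.rel p.1 (f p.2)) (𝒯.m 𝔅)))
            (𝒯.tens (𝒯.xi (𝒯.map (fun q : T (T Y × X) × A =>
              va q.2 (𝒯.map Prod.snd q.1)) 𝔱)) L) := 𝒯.tens_assoc _ _ _
      _ ≤ 𝒯.tens (𝒯.xi (𝒯.map (fun p : T Y × X => b.rel p.1 (f p.2)) (𝒯.m 𝔅)))
            (χ (𝒯.map Prod.snd (𝒯.m 𝔅))) :=
          tens_le_tens_right (tens_le_of_le_ihom hLbound) _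
      _ ≤ hatMapRel b f χ (𝒯.m (𝒯.map Prod.fst 𝔮)) := by
          rw [hatMapRel_eq]
          exact le_iSup_of_le ⟨𝒯.m 𝔅, hWfst⟩ le_rfl
  calc 𝒯.tens (𝒯.xi (𝒯.map (fun p : T Y × (T Y → V) => p.2 p.1) 𝔮)) L
      = 𝒯.tens (𝒯.xi (𝒯.map (fun s : T Y × A => hatMapRel b f (va s.2) s.1) 𝔰)) L := by
        rw [hev]
    _ = 𝒯.tens (⨆ 𝔱 : {𝔱 : T (T (T Y × X) × A) //
          𝒯.map (fun q : T (T Y × X) × A =>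
            ((𝒯.m (𝒯.map Prod.fst q.1), q.2) : T Y × A)) 𝔱 = 𝔰},
          𝒯.xi (𝒯.map (fun q : T (T Y × X) × A =>
            𝒯.tens (𝒯.xi (𝒯.map (fun p : T Y × X => b.rel p.1 (f p.2)) q.1))
              (va q.2 (𝒯.map Prod.snd q.1))) 𝔱.1)) L := by rw [hxn]
    _ = ⨆ 𝔱 : {𝔱 : T (T (T Y × X) × A) //
          𝒯.map (fun q : T (T Y × X) × A =>
            ((𝒯.m (𝒯.map Prod.fst q.1), q.2) : T Y × A)) 𝔱 = 𝔰},
          𝒯.tens (𝒯.xi (𝒯.map (fun q : T (T Y × X) × A =>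
            𝒯.tens (𝒯.xi (𝒯.map (fun p : T Y × X => b.rel p.1 (f p.2)) q.1))
              (va q.2 (𝒯.map Prod.snd q.1))) 𝔱.1)) L := tens_iSup_left _ _
    _ ≤ hatMapRel b f χ (𝒯.m (𝒯.map Prod.fst 𝔮)) := iSup_le fun 𝔱 => key 𝔱.1 𝔱.2

end Aux4
section Aux5

variable {V : Type u} [CompleteLattice V] {T : Type u → Type u} {𝒯 : TopTheory V T}

lemma plus_dense_aux {X Y A : Type u} (b : 𝒯.TCatStr Y) (f : X → Y) (va : A → (T Y → V))
    (hva : ∀ q : A, 𝒯.unit ≤ ⨆ 𝔵 : T X, va q (𝒯.map f 𝔵)) (𝔭 : T A) (y : Y) :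
    𝒯.powRel Y (𝒯.map va 𝔭) (fun 𝔶 => b.rel 𝔶 y) ≤ ⨆ 𝔵 : T X, b.rel (𝒯.map f 𝔵) y := by
  set L := 𝒯.powRel Y (𝒯.map va 𝔭) (fun 𝔶 => b.rel 𝔶 y) with hL0
  have h1 : 𝒯.unit ≤ 𝒯.xi (𝒯.map (fun q => ⨆ 𝔵 : T X, va q (𝒯.map f 𝔵)) 𝔭) :=
    unit_le_xi _ hva 𝔭
  have h2 := 𝒯.xi_nat (Prod.snd : T X × A → A) (fun p : T X × A => va p.2 (𝒯.map f p.1)) 𝔭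
  have h3 : (fun q : A => ⨆ x : {x : T X × A // x.2 = q}, va x.1.2 (𝒯.map f x.1.1)) =
      (fun q : A => ⨆ 𝔵 : T X, va q (𝒯.map f 𝔵)) := by
    funext q
    exact iSup_snd_fiber (fun p : T X × A => va p.2 (𝒯.map f p.1)) q
  rw [h3] at h2
  have key : ∀ 𝔯 : T (T X × A), 𝒯.map Prod.snd 𝔯 = 𝔭 →
      𝒯.tens (𝒯.xi (𝒯.map (fun p : T X × A => va p.2 (𝒯.map f p.1)) 𝔯)) L ≤
        ⨆ 𝔵 : T X, b.rel (𝒯.map f 𝔵) y := by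
    intro 𝔯 hr
    have hq : 𝒯.map Prod.snd (𝒯.map (fun p : T X × A =>
        ((𝒯.map f p.1, va p.2) : T Y × (T Y → V))) 𝔯) = 𝒯.map va 𝔭 := by
      rw [map_map, ← hr, map_map]
    have hLb := iInf_le (fun 𝔮 : {q : T (T Y × (T Y → V)) // 𝒯.map Prod.snd q = 𝒯.map va 𝔭} =>
      𝒯.ihom (𝒯.xi (𝒯.map (fun p : T Y × (T Y → V) => p.2 p.1) 𝔮.1))
        ((fun 𝔶 => b.rel 𝔶 y) (𝒯.m (𝒯.map Prod.fst 𝔮.1))))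
      ⟨𝒯.map (fun p : T X × A => ((𝒯.map f p.1, va p.2) : T Y × (T Y → V))) 𝔯, hq⟩
    have hev : 𝒯.map (fun p : T Y × (T Y → V) => p.2 p.1)
        (𝒯.map (fun p : T X × A => ((𝒯.map f p.1, va p.2) : T Y × (T Y → V))) 𝔯) =
        𝒯.map (fun p : T X × A => va p.2 (𝒯.map f p.1)) 𝔯 := map_map _ _ _
    have hm : 𝒯.m (𝒯.map Prod.fst (𝒯.map (fun p : T X × A =>
        ((𝒯.map f p.1, va p.2) : T Y × (T Y → V))) 𝔯)) =
        𝒯.map f (𝒯.m (𝒯.map Prod.fst 𝔯)) := by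
      have e1 : 𝒯.map Prod.fst (𝒯.map (fun p : T X × A =>
          ((𝒯.map f p.1, va p.2) : T Y × (T Y → V))) 𝔯) =
          𝒯.map (fun p : T X × A => 𝒯.map f p.1) 𝔯 := map_map _ _ _
      have e2 : 𝒯.map (fun p : T X × A => 𝒯.map f p.1) 𝔯 =
          𝒯.map (𝒯.map f) (𝒯.map Prod.fst 𝔯) := (map_map Prod.fst (𝒯.map f) 𝔯).symm
      rw [e1, e2, ← 𝒯.m_nat]
    rw [hev, hm] at hLb
    exact le_trans (tens_le_of_le_ihom hLb)
      (le_iSup (fun 𝔵 : T X => b.rel (𝒯.map f 𝔵) y) (𝒯.m (𝒯.map Prod.fst 𝔯)))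
  calc L = 𝒯.tens 𝒯.unit L := (𝒯.unit_tens L).symm
    _ ≤ 𝒯.tens (𝒯.xi (𝒯.map (fun q => ⨆ 𝔵 : T X, va q (𝒯.map f 𝔵)) 𝔭)) L :=
        tens_le_tens_left h1 L
    _ = 𝒯.tens (⨆ 𝔯 : {𝔯 : T (T X × A) // 𝒯.map Prod.snd 𝔯 = 𝔭},
          𝒯.xi (𝒯.map (fun p : T X × A => va p.2 (𝒯.map f p.1)) 𝔯.1)) L := by rw [h2]
    _ = ⨆ 𝔯 : {𝔯 : T (T X × A) // 𝒯.map Prod.snd 𝔯 = 𝔭},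
          𝒯.tens (𝒯.xi (𝒯.map (fun p : T X × A => va p.2 (𝒯.map f p.1)) 𝔯.1)) L :=
        tens_iSup_left _ _
    _ ≤ ⨆ 𝔵 : T X, b.rel (𝒯.map f 𝔵) y := iSup_le fun 𝔯 => key 𝔯.1 𝔯.2

end Aux5
/-- Proposition 5.6. For a `𝒯`-functor `f : X → Y` the following
are equivalent: (i) `f` is dense; (ii) `f⁺ : X⁺ → Y⁺` is left adjoint; (iii) `f⁺` is
dense. If moreover `X` and `Y` are inhabited-cocomplete and `f` is
inhabited-cocontinuous, these are also equivalent to: (iv) `f` is left adjoint. -/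
theorem statement19 (𝒯 : TopTheory V T) {X Y : Type u}
    (a : 𝒯.TCatStr X) (b : 𝒯.TCatStr Y)
    (hsa : 𝒯.TCatStr (Hat a)) (hhsa : IsHatStr a hsa)
    (hsb : 𝒯.TCatStr (Hat b)) (hhsb : IsHatStr b hsb)
    (psa : 𝒯.TCatStr (Plus a)) (hpsa : IsPlusStr a hsa psa)
    (psb : 𝒯.TCatStr (Plus b)) (hpsb : IsPlusStr b hsb psb)
    (f : X → Y) (hf : IsTFunctor a b f)
    (fh : Hat a → Hat b) (hfh : IsHatMap a b f fh)
    (fp : Plus a → Plus b) (hfp : ∀ ψ : Plus a, (fp ψ).1 = fh ψ.1) :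
    ((Dense b f ↔ IsLeftAdjoint psa psb fp) ∧ (Dense b f ↔ Dense psb fp)) ∧
    (ICocomplete a → ICocomplete b → ICocontinuous a b f →
      (Dense b f ↔ IsLeftAdjoint a b f)) := by
  have hpsaR : ∀ (𝔭 : T (Plus a)) (φ : Plus a),
      psa.rel 𝔭 φ = 𝒯.powRel X (𝒯.map (fun q : Plus a => q.1.1) 𝔭) φ.1.1 := by
    intro 𝔭 φ
    rw [hpsa, hhsa]
    exact congrArg (fun z => 𝒯.powRel X z φ.1.1) (map_map _ _ _)
  have hpsbR : ∀ (𝔮 : T (Plus b)) (ψ : Plus b),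
      psb.rel 𝔮 ψ = 𝒯.powRel Y (𝒯.map (fun q : Plus b => q.1.1) 𝔮) ψ.1.1 := by
    intro 𝔮 ψ
    rw [hpsb, hhsb]
    exact congrArg (fun z => 𝒯.powRel Y z ψ.1.1) (map_map _ _ _)
  have hfpval : ∀ q : Plus a, (fp q).1.1 = hatMapRel b f q.1.1 := by
    intro q
    funext 𝔶
    rw [hfp q, hfh]
  have hφinh : ∀ q : Plus a, 𝒯.unit ≤ ⨆ 𝔵 : T X, q.1.1 𝔵 :=
    fun q => le_trans q.2 (iInf_le _ PUnit.unit)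
  have hψinhY : ∀ ψ : Plus b, 𝒯.unit ≤ ⨆ 𝔶 : T Y, ψ.1.1 𝔶 :=
    fun ψ => le_trans ψ.2 (iInf_le _ PUnit.unit)
  -- `f⁺` is always a `𝒯`-functor
  have hfpfun : IsTFunctor psa psb fp := by
    intro 𝔭 φ
    rw [hpsaR, hpsbR]
    have hmap1 : 𝒯.map (fun q : Plus b => q.1.1) (𝒯.map fp 𝔭) =
        𝒯.map (fun q : Plus a => hatMapRel b f q.1.1) 𝔭 := by
      rw [map_map]
      exact map_congr (fun q => hfpval q) 𝔭
    rw [hmap1, hfpval φ]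
    exact powRel_hatMap_le b f (fun q : Plus a => q.1.1) φ.1.1 𝔭
  -- (i) → (ii)
  have hAtoB : Dense b f → IsLeftAdjoint psa psb fp := by
    intro hd
    set g : Plus b → Plus a := fun ψ =>
      ⟨⟨fun 𝔵 => ψ.1.1 (𝒯.map f 𝔵), pullback_presheaf hf ψ.1.2⟩,
       le_iInf fun _ => dense_psh_inhabited hd ψ.1.2 (hψinhY ψ)⟩ with hg
    refine ⟨hfpfun, g, ?_, ?_, ?_⟩
    · -- g is a 𝒯-functor
      intro 𝔮 ψ
      rw [hpsbR, hpsaR]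
      have hmap : 𝒯.map (fun q : Plus a => q.1.1) (𝒯.map g 𝔮) =
          𝒯.map (fun ρ : T Y → V => fun 𝔵 => ρ (𝒯.map f 𝔵))
            (𝒯.map (fun q : Plus b => q.1.1) 𝔮) := by
        rw [hg]
        exact (map_map _ _ _).trans (map_map (fun q : Plus b => q.1.1) (fun ρ : T Y → V => fun 𝔵 => ρ (𝒯.map f 𝔵)) 𝔮).symm
      rw [hmap]
      exact powRel_precomp f (𝒯.map (fun q : Plus b => q.1.1) 𝔮) ψ.1.1
    · -- unit of the adjunction
      intro 𝔭 φ
      rw [hpsaR 𝔭 φ, hpsaR 𝔭 (g (fp φ))]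
      refine powRel_mono _ fun 𝔵 => ?_
      rw [hg]
      show φ.1.1 𝔵 ≤ (fp φ).1.1 (𝒯.map f 𝔵)
      rw [hfpval φ]
      exact le_hatMap_self b f φ.1.1 𝔵
    · -- counit of the adjunction
      intro 𝔮 ψ
      rw [hpsbR 𝔮 (fp (g ψ)), hpsbR 𝔮 ψ]
      refine powRel_mono _ fun 𝔶 => ?_
      rw [hfpval (g ψ), hg]
      show hatMapRel b f (fun 𝔵 => ψ.1.1 (𝒯.map f 𝔵)) 𝔶 ≤ ψ.1.1 𝔶
      exact hatMap_comp_le f ψ.1.2 𝔶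
  -- (ii) → (iii)
  have hBtoC : IsLeftAdjoint psa psb fp → Dense psb fp := by
    rintro ⟨-, gq, -, hadj⟩
    exact adj_dense hadj
  -- (iii) → (i)
  have hCtoA : Dense psb fp → Dense b f := by
    intro hc
    refine le_iInf fun y => ?_
    have hinh : 𝒯.InhabitedMod (fun (𝔶 : T Y) (_ : PUnit.{u+1}) => b.rel 𝔶 y) :=
      le_iInf fun _ => le_trans (b.le_refl y) (le_iSup (fun 𝔶 => b.rel 𝔶 y) (𝒯.e y))
    have hva : ∀ q : Plus a, 𝒯.unit ≤ ⨆ 𝔵 : T X, (fp q).1.1 (𝒯.map f 𝔵) := by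
      intro q
      rw [hfpval q]
      exact le_trans (hφinh q) (iSup_mono fun 𝔵 => le_hatMap_self b f q.1.1 𝔵)
    refine le_trans (le_trans hc (iInf_le _
      (⟨⟨fun 𝔶 => b.rel 𝔶 y, yoneda_presheaf b y⟩, hinh⟩ : Plus b))) (iSup_le fun 𝔭 => ?_)
    refine le_trans (le_of_eq (hpsbR (𝒯.map fp 𝔭)
      ⟨⟨fun 𝔶 => b.rel 𝔶 y, yoneda_presheaf b y⟩, hinh⟩)) ?_
    rw [map_map]
    exact plus_dense_aux b f (fun q : Plus a => (fp q).1.1) hva 𝔭 y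
  -- (iv) → (i)
  have hDtoA : IsLeftAdjoint a b f → Dense b f := by
    rintro ⟨-, gq, -, hadj⟩
    exact adj_dense hadj
  -- (i) → (iv) under cocompleteness assumptions
  have hAtoD : ICocomplete a → ICocontinuous a b f → Dense b f → IsLeftAdjoint a b f := by
    intro hXc hcont hd
    have hid : IsTFunctor a a (id : X → X) := by
      intro 𝔵 x
      rw [𝒯.map_id]
      exact le_rfl
    have hmod : 𝒯.IsTModRel a.rel b.rel (modStar b f) := modStar_isMod hf
    obtain ⟨g, hgfun, hgcol⟩ := hXc X Y a b id hid (modStar b f) hmod hd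
    have hcol2 : IsColimit b (f ∘ id) (modStar b f) (f ∘ g) :=
      hcont X Y a b id (modStar b f) g hid hmod hd hgfun hgcol
    refine ⟨hf, g, hgfun, ?_, ?_⟩
    · -- unit
      intro 𝔵 x
      have hcolz := hgcol (𝒯.e (f x)) (g (f x))
      have hge : modStar a g (𝒯.e (f x)) (g (f x)) = a.rel (𝒯.e (g (f x))) (g (f x)) := by
        show a.rel (𝒯.map g (𝒯.e (f x))) (g (f x)) = _
        rw [𝒯.e_nat]
      have hunit1 : 𝒯.unit ≤
          𝒯.extend (modStar a id) (modStar b f) (𝒯.e (f x)) (g (f x)) := by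
        rw [← hcolz, hge]
        exact a.le_refl (g (f x))
      have hS : 𝒯.unit ≤ 𝒯.ihom (⨆ 𝔛 : {𝔛 : T (T X) // 𝒯.m 𝔛 = 𝒯.e x},
          𝒯.Txi (modStar b f) 𝔛.1 (𝒯.e (f x))) (modStar a id (𝒯.e x) (g (f x))) :=
        le_trans hunit1 (iInf_le _ (𝒯.e x))
      have hTx : 𝒯.unit ≤ ⨆ 𝔛 : {𝔛 : T (T X) // 𝒯.m 𝔛 = 𝒯.e x},
          𝒯.Txi (modStar b f) 𝔛.1 (𝒯.e (f x)) := by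
        have hpt : 𝒯.unit ≤ modStar b f (𝒯.e x) (f x) := by
          show 𝒯.unit ≤ b.rel (𝒯.map f (𝒯.e x)) (f x)
          rw [𝒯.e_nat]
          exact b.le_refl (f x)
        exact le_trans hpt (le_iSup_of_le ⟨𝒯.e (𝒯.e x), 𝒯.m_e _⟩
          (le_Txi_pure (modStar b f) (𝒯.e x) (f x)))
      have h6 := tens_le_of_le_ihom hS
      rw [tens_unit] at h6
      have h8 := le_trans hTx h6
      have h9 : modStar a id (𝒯.e x) (g (f x)) = a.rel (𝒯.e x) (g (f x)) := by
        show a.rel (𝒯.map id (𝒯.e x)) (g (f x)) = _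
        rw [𝒯.map_id]
        rfl
      rw [h9] at h8
      calc a.rel 𝔵 x = 𝒯.tens (a.rel 𝔵 x) 𝒯.unit := (tens_unit _).symm
        _ ≤ 𝒯.tens (a.rel 𝔵 x) (a.rel (𝒯.e x) (g (f x))) := tens_le_tens_right h8 _
        _ ≤ a.rel 𝔵 (g (f x)) := tens_rel_le a 𝔵 x (g (f x))
    · -- counit
      intro 𝔶 y
      have hcolz := hcol2 (𝒯.e y) y
      have hco1 : 𝒯.unit ≤ b.rel (𝒯.e (f (g y))) y := by
        have hlhs : modStar b (f ∘ g) (𝒯.e y) y = b.rel (𝒯.e (f (g y))) y := by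
          show b.rel (𝒯.map (f ∘ g) (𝒯.e y)) y = _
          rw [𝒯.e_nat]
          rfl
        rw [← hlhs, hcolz]
        refine le_iInf fun 𝔵₀ => ?_
        refine le_ihom ?_
        rw [tens_unit]
        refine iSup_le fun 𝔛 => ?_
        have h1 : 𝒯.Txi (modStar b f) 𝔛.1 (𝒯.e y) ≤
            𝒯.Txi b.rel (𝒯.map (𝒯.map f) 𝔛.1) (𝒯.map id (𝒯.e y)) :=
          Txi_comp_le (r := modStar b f) (r' := b.rel) (𝒯.map f) id
            (fun 𝔵₁ y₁ => le_rfl) 𝔛.1 (𝒯.e y)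
        rw [𝒯.map_id] at h1
        refine le_trans h1 ?_
        refine le_trans (Txi_e_le b _ y) (le_of_eq ?_)
        rw [← 𝒯.m_nat, 𝔛.2]
        rfl
      calc b.rel 𝔶 (f (g y)) = 𝒯.tens (b.rel 𝔶 (f (g y))) 𝒯.unit := (tens_unit _).symm
        _ ≤ 𝒯.tens (b.rel 𝔶 (f (g y))) (b.rel (𝒯.e (f (g y))) y) := tens_le_tens_right hco1 _
        _ ≤ b.rel 𝔶 y := tens_rel_le b 𝔶 (f (g y)) y
  exact ⟨⟨⟨hAtoB, fun hB => hCtoA (hBtoC hB)⟩, ⟨fun hA => hBtoC (hAtoB hA), hCtoA⟩⟩,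
    fun hXc _ hcont => ⟨hAtoD hXc hcont, hDtoA⟩⟩
end TopTheory
end Paper
end
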